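/- For each j ∈ ℕ and each spiral strip S_j^k, the following holds: if a plane curve in Π_{x_j^k} joins the entrance segment [x_j^k, x(2π)] to the exit segment [x(2π(M_j−1)), x(2πM_j)] and is disjoint from the Archimedean spiral {x(ψ) : ψ ∈ [0, 2πM_j]}, then for M_j chosen large enough its length is at least 10. -/

import Mathlib

open Set Real

/-- The Archimedean spiral with initial radius `ρ₀` and pitch parameter `ε`:
in polar coordinates, `ρ(ψ) = ρ₀ - ε·ψ`. -/
noncomputable def archSpiral (ρ₀ ε ψ : ℝ) : EuclideanSpace ℝ (Fin 2) :=
  (WithLp.equiv 2 (Fin 2 → ℝ)).symm ![(ρ₀ - ε * ψ) * Real.cos ψ, (ρ₀ - ε * ψ) * Real.sin ψ]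

namespace Stmt12Aux

noncomputable def toC (v : EuclideanSpace ℝ (Fin 2)) : ℂ := (v 0 : ℂ) + (v 1 : ℂ) * Complex.I

lemma toC_dist (x y : EuclideanSpace ℝ (Fin 2)) : dist (toC x) (toC y) = dist x y := by
  rw [EuclideanSpace.dist_eq, Complex.dist_eq, Complex.norm_def, Complex.normSq_apply]
  congr 1
  rw [Fin.sum_univ_two]
  simp only [toC, Complex.add_re, Complex.add_im, Complex.sub_re, Complex.sub_im,
    Complex.ofReal_re, Complex.ofReal_im, Complex.mul_re, Complex.mul_im, Complex.I_re,
    Complex.I_im, Real.dist_eq]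
  rw [sq_abs, sq_abs]
  ring

lemma toC_lipschitz : LipschitzWith 1 toC :=
  LipschitzWith.of_dist_le_mul fun x y => by rw [toC_dist]; simp

lemma toC_inj : Function.Injective toC := by
  intro x y h
  have hd : dist x y = 0 := by rw [← toC_dist, h, dist_self]
  exact dist_eq_zero.mp hd

lemma toC_combo (a b : ℝ) (x y : EuclideanSpace ℝ (Fin 2)) :
    toC (a • x + b • y) = (a : ℂ) * toC x + (b : ℂ) * toC y := by
  simp [toC, PiLp.add_apply, PiLp.smul_apply, smul_eq_mul]
  push_cast
  ring

lemma toC_archSpiral (ρ₀ ε ψ : ℝ) :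
    toC (archSpiral ρ₀ ε ψ) = ((ρ₀ - ε * ψ : ℝ) : ℂ) * Complex.exp ((ψ : ℂ) * Complex.I) := by
  simp [toC, archSpiral, WithLp.equiv_symm_apply, Complex.exp_mul_I, ← Complex.ofReal_cos,
    ← Complex.ofReal_sin]
  push_cast
  ring

end Stmt12Aux

namespace Stmt12Aux

open Complex in
lemma cross (ζ : ℝ → ℂ) (a b ρ₀ ε ℓ : ℝ) (hab : a ≤ b)
    (hζ : ContinuousOn ζ (Icc a b)) (hε : 0 < ε) (hℓ : 0 ≤ ℓ)
    (hr : 0 < ρ₀ - ε * (ℓ + 4 * π))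
    (ha : ρ₀ - ε * ℓ ≤ ‖ζ a‖)
    (hbnd : ‖ζ b‖ ≤ ρ₀ - ε * (ℓ + 4 * π))
    (havoid : ∀ t ∈ Icc a b,
      ρ₀ - ε * (ℓ + 4 * π) ≤ ‖ζ t‖ → ‖ζ t‖ ≤ ρ₀ - ε * ℓ →
      ζ t ≠ ((‖ζ t‖ : ℝ) : ℂ) *
        Complex.exp ((((ρ₀ - ‖ζ t‖) / ε : ℝ) : ℂ) * Complex.I)) :
    ENNReal.ofReal (4 * (ρ₀ - ε * (ℓ + 4 * π))) ≤ eVariationOn ζ (Icc a b) := by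
  have hπ : 0 < π := Real.pi_pos
  set rmin := ρ₀ - ε * (ℓ + 4 * π) with hrmin
  set u : ℝ → ℝ := fun t => (ρ₀ - ‖ζ t‖) / ε with hu
  have hucont : ContinuousOn u (Icc a b) :=
    ((continuous_const.sub continuous_norm).comp_continuousOn hζ).div_const ε
  have huabs : ∀ t, ‖ζ t‖ = ρ₀ - ε * u t := by
    intro t; simp only [hu]; field_simp; ring
  have hua : u a ≤ ℓ := by
    rw [huabs a] at ha; nlinarith
  have hub' : ℓ + 4 * π ≤ u b := by
    rw [huabs b] at hbnd; nlinarith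
  -- first hitting time of ℓ + 4π
  obtain ⟨T', hT'mem, hT'⟩ : ∃ t ∈ Icc a b, u t = ℓ + 4 * π := by
    obtain ⟨t, ht, htv⟩ := intermediate_value_Icc hab hucont
      (⟨by linarith, hub'⟩ : ℓ + 4 * π ∈ Icc (u a) (u b))
    exact ⟨t, ht, htv⟩
  set HT : Set ℝ := Icc a b ∩ u ⁻¹' {ℓ + 4 * π} with hHT
  have hHTclosed : IsClosed HT :=
    hucont.preimage_isClosed_of_isClosed isClosed_Icc isClosed_singleton
  have hHTne : HT.Nonempty := ⟨T', hT'mem, hT'⟩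
  have hHTbdd : BddBelow HT := ⟨a, fun t ht => ht.1.1⟩
  set T := sInf HT with hTdef
  have hTmem : T ∈ HT := hHTclosed.csInf_mem hHTne hHTbdd
  have hTval : u T = ℓ + 4 * π := hTmem.2
  have hTab : T ∈ Icc a b := hTmem.1
  have hTmin : ∀ t ∈ HT, T ≤ t := fun t ht => csInf_le hHTbdd ht
  have hup : ∀ t ∈ Icc a T, u t ≤ ℓ + 4 * π := by
    intro t ht
    by_contra hgt
    push_neg at hgt
    have htab : t ∈ Icc a b := ⟨ht.1, ht.2.trans hTab.2⟩
    obtain ⟨τ, hτ, hτv⟩ := intermediate_value_Icc ht.1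
      (hucont.mono (Icc_subset_Icc le_rfl htab.2))
      (⟨by linarith, le_of_lt hgt⟩ : ℓ + 4 * π ∈ Icc (u a) (u t))
    have hTτ : T ≤ τ := hTmin τ ⟨⟨hτ.1, hτ.2.trans htab.2⟩, hτv⟩
    have hτt : τ = t := le_antisymm hτ.2 (by linarith [ht.2])
    rw [hτt] at hτv; linarith
  -- last hitting time of ℓ in [a,T]
  have haT : a ≤ T := hTab.1
  have hIccsub : Icc a T ⊆ Icc a b := Icc_subset_Icc le_rfl hTab.2
  have hucontT : ContinuousOn u (Icc a T) := hucont.mono hIccsub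
  set HS : Set ℝ := Icc a T ∩ u ⁻¹' {ℓ} with hHS
  have hHSne : HS.Nonempty := by
    obtain ⟨t, ht, htv⟩ := intermediate_value_Icc haT hucontT
      (⟨hua, by rw [hTval]; linarith⟩ : ℓ ∈ Icc (u a) (u T))
    exact ⟨t, ht, htv⟩
  have hHSclosed : IsClosed HS :=
    hucontT.preimage_isClosed_of_isClosed isClosed_Icc isClosed_singleton
  have hHSbdd : BddAbove HS := ⟨T, fun t ht => ht.1.2⟩
  set S := sSup HS with hSdef
  have hSmem : S ∈ HS := hHSclosed.csSup_mem hHSne hHSbdd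
  have hSval : u S = ℓ := hSmem.2
  have hST : S ≤ T := hSmem.1.2
  have haS : a ≤ S := hSmem.1.1
  have hSmax : ∀ t ∈ HS, t ≤ S := fun t ht => le_csSup hHSbdd ht
  have hlow : ∀ t ∈ Icc S T, ℓ ≤ u t := by
    intro t ht
    by_contra hlt
    push_neg at hlt
    obtain ⟨τ, hτ, hτv⟩ := intermediate_value_Icc ht.2
      (hucontT.mono (Icc_subset_Icc (haS.trans ht.1) le_rfl))
      (⟨le_of_lt hlt, by rw [hTval]; linarith⟩ : ℓ ∈ Icc (u t) (u T))
    have hτS : τ ≤ S := hSmax τ ⟨⟨haS.trans (ht.1.trans hτ.1), hτ.2⟩, hτv⟩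
    have hτt : τ = t := le_antisymm (hτS.trans ht.1) hτ.1
    rw [hτt] at hτv; linarith
  -- radius bounds on [S,T]
  have hSTsub : Icc S T ⊆ Icc a b := Icc_subset_Icc haS hTab.2
  have hrmem : ∀ t ∈ Icc S T, rmin ≤ ‖ζ t‖ ∧ ‖ζ t‖ ≤ ρ₀ - ε * ℓ := by
    intro t ht
    have h1 := hlow t ht
    have h2 := hup t ⟨haS.trans ht.1, ht.2⟩
    rw [huabs t]
    constructor <;> nlinarith
  -- the rotated curve
  set ξ : ℝ → ℂ := fun t => -ζ t * Complex.exp ((((-u t : ℝ)) : ℂ) * Complex.I) with hξ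
  have habsξ : ∀ t, ‖ξ t‖ = ‖ζ t‖ := by
    intro t
    simp only [hξ]
    rw [norm_mul, norm_neg, Complex.norm_exp_ofReal_mul_I, mul_one]
  have hζξ : ∀ t, ζ t = -ξ t * Complex.exp (((u t : ℝ) : ℂ) * Complex.I) := by
    intro t
    simp only [hξ, neg_mul, neg_neg]
    rw [mul_assoc, ← Complex.exp_add]
    have hz : (((-u t : ℝ)) : ℂ) * Complex.I + ((u t : ℝ) : ℂ) * Complex.I = 0 := by
      push_cast; ring
    rw [hz, Complex.exp_zero, mul_one]
  have hslit : ∀ t ∈ Icc S T, ξ t ∈ Complex.slitPlane := by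
    intro t ht
    by_contra hns
    rw [Complex.mem_slitPlane_iff] at hns
    push_neg at hns
    obtain ⟨hre, him⟩ := hns
    have hξreal : ξ t = (((ξ t).re : ℝ) : ℂ) := Complex.ext rfl (by simpa using him)
    have habs' : ‖ξ t‖ = -(ξ t).re := by
      rw [hξreal, Complex.norm_real, Real.norm_eq_abs, abs_of_nonpos hre, Complex.ofReal_re]
    have hξval : ξ t = -((‖ζ t‖ : ℝ) : ℂ) := by
      rw [hξreal, ← habsξ t, habs']
      simp
    have hζeq : ζ t = ((‖ζ t‖ : ℝ) : ℂ) *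
        Complex.exp (((u t : ℝ) : ℂ) * Complex.I) := by
      conv_lhs => rw [hζξ t, hξval]
      ring
    exact havoid t (hSTsub ht) (hrmem t ht).1 (hrmem t ht).2 hζeq
  set φ : ℝ → ℝ := fun t => Complex.arg (ξ t) with hφ
  set Θ : ℝ → ℝ := fun t => u t + φ t with hΘ
  have hξcont : ContinuousOn ξ (Icc S T) := by
    apply ContinuousOn.mul ((hζ.mono hSTsub).neg)
    apply Complex.continuous_exp.comp_continuousOn
    exact (Complex.continuous_ofReal.comp_continuousOn (hucont.mono hSTsub).neg).mul
      continuousOn_const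
  have hφcont : ContinuousOn φ (Icc S T) := fun t ht =>
    (Complex.continuousAt_arg (hslit t ht)).comp_continuousWithinAt (hξcont t ht)
  have hΘcont : ContinuousOn Θ (Icc S T) := (hucont.mono hSTsub).add hφcont
  have hζΘ : ∀ t ∈ Icc S T, ζ t = -((‖ζ t‖ : ℝ) : ℂ) *
      Complex.exp (((Θ t : ℝ) : ℂ) * Complex.I) := by
    intro t ht
    have h1 : ((‖ξ t‖ : ℝ) : ℂ) * Complex.exp (((φ t : ℝ) : ℂ) * Complex.I) = ξ t :=
      Complex.norm_mul_exp_arg_mul_I (ξ t)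
    calc ζ t = -ξ t * Complex.exp (((u t : ℝ) : ℂ) * Complex.I) := hζξ t
    _ = -(((‖ζ t‖ : ℝ) : ℂ) * Complex.exp (((φ t : ℝ) : ℂ) * Complex.I)) *
        Complex.exp (((u t : ℝ) : ℂ) * Complex.I) := by rw [← habsξ t, h1]
    _ = -((‖ζ t‖ : ℝ) : ℂ) * Complex.exp (((Θ t : ℝ) : ℂ) * Complex.I) := by
        simp only [hΘ]
        push_cast
        rw [add_mul, Complex.exp_add]
        ring
  have hφlt : ∀ t ∈ Icc S T, φ t < π := by
    intro t ht
    have h := hslit t ht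
    rw [Complex.mem_slitPlane_iff] at h
    exact Complex.arg_lt_pi_iff.2 (h.imp le_of_lt id)
  have hφgt : ∀ t, -π < φ t := fun t => Complex.neg_pi_lt_arg _
  have hSmem' : S ∈ Icc S T := ⟨le_rfl, hST⟩
  have hTmem' : T ∈ Icc S T := ⟨hST, le_rfl⟩
  have hΘdiff : Θ S + 2 * π < Θ T := by
    have h1 := hφlt S hSmem'
    have h2 := hφgt T
    simp only [hΘ]
    rw [hSval, hTval]
    linarith
  obtain ⟨τ₂, hτ₂mem, hτ₂⟩ := intermediate_value_Icc hST hΘcont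
    (⟨by linarith, by linarith⟩ : Θ S + π ∈ Icc (Θ S) (Θ T))
  obtain ⟨τ₃, hτ₃mem, hτ₃⟩ := intermediate_value_Icc hτ₂mem.2
    (hΘcont.mono (Icc_subset_Icc hτ₂mem.1 le_rfl))
    (⟨by rw [hτ₂]; linarith, by linarith⟩ : Θ S + 2 * π ∈ Icc (Θ τ₂) (Θ T))
  have hτ₃ST : τ₃ ∈ Icc S T := ⟨hτ₂mem.1.trans hτ₃mem.1, hτ₃mem.2⟩
  -- distance computations
  have hexp2 : Complex.exp (((Θ S + π : ℝ) : ℂ) * Complex.I) =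
      -Complex.exp (((Θ S : ℝ) : ℂ) * Complex.I) := by
    push_cast
    rw [add_mul, Complex.exp_add, Complex.exp_pi_mul_I]
    ring
  have hexp3 : Complex.exp (((Θ S + 2 * π : ℝ) : ℂ) * Complex.I) =
      Complex.exp (((Θ S : ℝ) : ℂ) * Complex.I) := by
    push_cast
    rw [add_mul, Complex.exp_add, Complex.exp_two_pi_mul_I]
    ring
  have habsexp : ‖Complex.exp (((Θ S : ℝ) : ℂ) * Complex.I)‖ = 1 :=
    Complex.norm_exp_ofReal_mul_I _
  have habsnn : ∀ t, 0 ≤ ‖ζ t‖ := fun t => norm_nonneg _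
  have hd1 : dist (ζ τ₂) (ζ S) = ‖ζ τ₂‖ + ‖ζ S‖ := by
    have e2 := hζΘ τ₂ hτ₂mem
    have eS := hζΘ S hSmem'
    rw [hτ₂, hexp2] at e2
    set r2 := ‖ζ τ₂‖ with hr2
    set rS := ‖ζ S‖ with hrS
    rw [Complex.dist_eq, e2, eS]
    have heq : -((r2 : ℝ) : ℂ) * -Complex.exp (((Θ S : ℝ) : ℂ) * Complex.I) -
        -((rS : ℝ) : ℂ) * Complex.exp (((Θ S : ℝ) : ℂ) * Complex.I) =
        (((r2 + rS : ℝ)) : ℂ) * Complex.exp (((Θ S : ℝ) : ℂ) * Complex.I) := by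
      push_cast; ring
    rw [heq, norm_mul, habsexp, mul_one, Complex.norm_real, Real.norm_eq_abs,
      _root_.abs_of_nonneg (add_nonneg (habsnn τ₂) (habsnn S))]
  have hd2 : dist (ζ τ₃) (ζ τ₂) = ‖ζ τ₃‖ + ‖ζ τ₂‖ := by
    have e3 := hζΘ τ₃ hτ₃ST
    have e2 := hζΘ τ₂ hτ₂mem
    rw [hτ₂, hexp2] at e2
    rw [hτ₃, hexp3] at e3
    set r3 := ‖ζ τ₃‖ with hr3
    set r2 := ‖ζ τ₂‖ with hr2
    rw [Complex.dist_eq, e3, e2]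
    have heq : -((r3 : ℝ) : ℂ) * Complex.exp (((Θ S : ℝ) : ℂ) * Complex.I) -
        -((r2 : ℝ) : ℂ) * -Complex.exp (((Θ S : ℝ) : ℂ) * Complex.I) =
        (((-(r3 + r2) : ℝ)) : ℂ) * Complex.exp (((Θ S : ℝ) : ℂ) * Complex.I) := by
      push_cast; ring
    rw [heq, norm_mul, habsexp, mul_one, Complex.norm_real, Real.norm_eq_abs, abs_neg,
      _root_.abs_of_nonneg (add_nonneg (habsnn τ₃) (habsnn τ₂))]
  -- conclude via a 3-point subdivision
  set w : ℕ → ℝ := fun n => if n = 0 then S else if n = 1 then τ₂ else τ₃ with hw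
  have hwmono : Monotone w := by
    apply monotone_nat_of_le_succ
    intro n
    match n with
    | 0 => simpa [hw] using hτ₂mem.1
    | 1 => simpa [hw] using hτ₃mem.1
    | (n+2) => simp [hw]
  have hwmem : ∀ n, w n ∈ Icc a b := by
    intro n
    match n with
    | 0 => simpa [hw] using hSTsub hSmem'
    | 1 => simpa [hw] using hSTsub hτ₂mem
    | (n+2) => simpa [hw] using hSTsub hτ₃ST
  have hsum := eVariationOn.sum_le (f := ζ) (n := 2) hwmono hwmem
  rw [Finset.sum_range_succ, Finset.sum_range_succ, Finset.sum_range_zero, zero_add] at hsum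
  have hw0 : w 0 = S := by simp [hw]
  have hw1 : w 1 = τ₂ := by simp [hw]
  have hw2 : w 2 = τ₃ := by simp [hw]
  rw [hw0, hw1, hw2] at hsum
  refine le_trans ?_ hsum
  rw [edist_dist, edist_dist, hd1, hd2,
    ← ENNReal.ofReal_add (by positivity) (by positivity)]
  apply ENNReal.ofReal_le_ofReal
  have b1 := (hrmem S hSmem').1
  have b2 := (hrmem τ₂ hτ₂mem).1
  have b3 := (hrmem τ₃ hτ₃ST).1
  linarith

end Stmt12Aux


set_option maxHeartbeats 1000000

/-- the labyrinth property (∗₁). For every initial radius `ρ₀ > 0` there is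
`M₀` such that for all `M ≥ M₀` and every (small) pitch `ε > 0` with `ε·2πM < ρ₀`:
any plane curve joining the entrance segment `[x(0), x(2π)]` to the exit segment
`[x(2π(M−1)), x(2πM)]` and disjoint from the Archimedean spiral
`{x(ψ) : ψ ∈ [0, 2πM]}` has length at least `10`. -/
theorem stmt12 (ρ₀ : ℝ) (hρ₀ : 0 < ρ₀) :
    ∃ M₀ : ℕ, ∀ M : ℕ, M₀ ≤ M → ∀ ε : ℝ, 0 < ε → ε * (2 * π * M) < ρ₀ →
      ∀ δ : ℝ → EuclideanSpace ℝ (Fin 2), ContinuousOn δ (Icc 0 1) →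
        δ 0 ∈ segment ℝ (archSpiral ρ₀ ε 0) (archSpiral ρ₀ ε (2 * π)) →
        δ 1 ∈ segment ℝ (archSpiral ρ₀ ε (2 * π * ((M : ℝ) - 1)))
          (archSpiral ρ₀ ε (2 * π * M)) →
        (∀ t ∈ Icc (0:ℝ) 1, ∀ ψ ∈ Icc (0:ℝ) (2 * π * M), δ t ≠ archSpiral ρ₀ ε ψ) →
        ENNReal.ofReal 10 ≤ eVariationOn δ (Icc (0:ℝ) 1) := by
  classical
  have hπ : 0 < π := Real.pi_pos
  set N : ℕ := ⌈(5:ℝ)/ρ₀⌉₊ + 1 with hN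
  refine ⟨4 * N + 2, ?_⟩
  intro M hM ε hε hεM δ hδ h0 h1 hdisj
  set ζ : ℝ → ℂ := fun t => Stmt12Aux.toC (δ t) with hζdef
  clear_value ζ
  have hζcont : ContinuousOn ζ (Icc 0 1) := by
    rw [hζdef]
    exact Stmt12Aux.toC_lipschitz.continuous.comp_continuousOn hδ
  have hMR : (4 * (N:ℝ) + 2) ≤ (M:ℝ) := by exact_mod_cast hM
  have hNR : (1:ℝ) ≤ (N:ℝ) := by
    have : 1 ≤ N := by omega
    exact_mod_cast this
  have hM1 : (1:ℝ) ≤ (M:ℝ) := by linarith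
  have hεM' : ε * (2 * π) < ρ₀ := by nlinarith
  have hεMpos : 0 < ρ₀ - ε * (2 * π * M) := by linarith
  -- entrance
  obtain ⟨a₀, b₀, ha₀, hb₀, hab₀, hcomb₀⟩ := h0
  have hζ0 : ζ 0 = ((a₀ * ρ₀ + b₀ * (ρ₀ - ε * (2 * π)) : ℝ) : ℂ) := by
    simp only [hζdef]
    rw [← hcomb₀, Stmt12Aux.toC_combo, Stmt12Aux.toC_archSpiral, Stmt12Aux.toC_archSpiral]
    rw [Complex.ofReal_zero, zero_mul, Complex.exp_zero]
    rw [show ((2 * π : ℝ) : ℂ) * Complex.I = 2 * ↑π * Complex.I by push_cast; ring,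
      Complex.exp_two_pi_mul_I]
    push_cast
    ring
  have habs0 : ρ₀ - ε * (2 * π) ≤ ‖ζ 0‖ := by
    rw [hζ0, Complex.norm_real, Real.norm_eq_abs]
    have h1' : ρ₀ - ε * (2 * π) ≤ a₀ * ρ₀ + b₀ * (ρ₀ - ε * (2 * π)) := by
      have hb' : b₀ = 1 - a₀ := by linarith
      rw [hb']
      nlinarith [mul_nonneg ha₀ (by positivity : (0:ℝ) ≤ ε * (2 * π))]
    exact h1'.trans (le_abs_self _)
  -- exit
  obtain ⟨a₁, b₁, ha₁, hb₁, hab₁, hcomb₁⟩ := h1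
  have hζ1 : ζ 1 = ((a₁ * (ρ₀ - ε * (2 * π * ((M:ℝ) - 1))) +
      b₁ * (ρ₀ - ε * (2 * π * M)) : ℝ) : ℂ) := by
    simp only [hζdef]
    rw [← hcomb₁, Stmt12Aux.toC_combo, Stmt12Aux.toC_archSpiral, Stmt12Aux.toC_archSpiral]
    have e1 : Complex.exp (((2 * π * ((M:ℝ) - 1) : ℝ) : ℂ) * Complex.I) = 1 := by
      rw [show (((2 * π * ((M:ℝ) - 1) : ℝ)) : ℂ) * Complex.I =
          (((M:ℤ) - 1 : ℤ) : ℂ) * (2 * ↑π * Complex.I) by push_cast; ring,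
        Complex.exp_int_mul_two_pi_mul_I]
    have e2 : Complex.exp (((2 * π * (M:ℝ) : ℝ) : ℂ) * Complex.I) = 1 := by
      rw [show (((2 * π * (M:ℝ) : ℝ)) : ℂ) * Complex.I =
          ((M:ℤ) : ℂ) * (2 * ↑π * Complex.I) by push_cast; ring,
        Complex.exp_int_mul_two_pi_mul_I]
    rw [e1, e2]
    push_cast
    ring
  have habs1 : ‖ζ 1‖ ≤ ρ₀ - ε * (2 * π * ((M:ℝ) - 1)) := by
    rw [hζ1, Complex.norm_real, Real.norm_eq_abs]
    have hd : (0:ℝ) ≤ ε * (2 * π) := by positivity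
    have hc₂ : (0:ℝ) ≤ ρ₀ - ε * (2 * π * M) := le_of_lt hεMpos
    have hc₁ : (0:ℝ) ≤ ρ₀ - ε * (2 * π * ((M:ℝ) - 1)) := by nlinarith
    have hnn : 0 ≤ a₁ * (ρ₀ - ε * (2 * π * ((M:ℝ) - 1))) + b₁ * (ρ₀ - ε * (2 * π * M)) :=
      add_nonneg (mul_nonneg ha₁ hc₁) (mul_nonneg hb₁ hc₂)
    rw [_root_.abs_of_nonneg hnn]
    have hb' : b₁ = 1 - a₁ := by linarith
    rw [hb']
    nlinarith [mul_nonneg hb₁ hd, mul_nonneg ha₁ hd]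
  -- the parameter function
  set u : ℝ → ℝ := fun t => (ρ₀ - ‖ζ t‖) / ε with hu
  clear_value u
  have hucont : ContinuousOn u (Icc 0 1) := by
    rw [hu]
    exact ((continuous_const.sub continuous_norm).comp_continuousOn hζcont).div_const ε
  have huabs : ∀ t, ‖ζ t‖ = ρ₀ - ε * u t := by
    intro t; simp only [hu]; field_simp; ring
  have hu0 : u 0 ≤ 2 * π := by
    simp only [hu]
    rw [div_le_iff₀ hε]
    nlinarith
  have hu1 : 2 * π * ((M:ℝ) - 1) ≤ u 1 := by
    simp only [hu]
    rw [le_div_iff₀ hε]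
    nlinarith
  -- levels
  set L : ℕ → ℝ := fun k => 2 * π + 4 * π * k with hL
  clear_value L
  have hLnn : ∀ k : ℕ, 0 ≤ L k := by
    intro k; simp only [hL]; positivity
  have hLsucc : ∀ k : ℕ, L (k + 1) = L k + 4 * π := by
    intro k; simp only [hL]; push_cast; ring
  have hLcast : ∀ k : ℕ, k ≤ N → (k:ℝ) ≤ (N:ℝ) := fun k hk => by exact_mod_cast hk
  have hLN : ∀ k : ℕ, k ≤ N → L k ≤ 2 * π * ((M:ℝ) - 1) := by
    intro k hk
    have hkR := hLcast k hk
    simp only [hL]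
    nlinarith
  have hhalf : ∀ k : ℕ, k ≤ N → ε * L k ≤ ρ₀ / 2 := by
    intro k hk
    have hkR := hLcast k hk
    have hLk : L k ≤ π * M := by simp only [hL]; nlinarith
    nlinarith [mul_le_mul_of_nonneg_left hLk (le_of_lt hε)]
  have hu02π : u 0 ≤ L 0 := by simp only [hL]; push_cast; linarith
  -- hitting times
  set A : ℕ → ℝ := fun k => if k = 0 then 0 else sInf (Icc (0:ℝ) 1 ∩ u ⁻¹' {L k}) with hA
  clear_value A
  have hA0 : A 0 = 0 := by simp [hA]
  have hAk : ∀ k : ℕ, 1 ≤ k → k ≤ N →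
      A k ∈ Icc (0:ℝ) 1 ∧ u (A k) = L k ∧
        ∀ t ∈ Icc (0:ℝ) 1 ∩ u ⁻¹' {L k}, A k ≤ t := by
    intro k hk1 hkN
    have hne : (Icc (0:ℝ) 1 ∩ u ⁻¹' {L k}).Nonempty := by
      have hmem : L k ∈ Icc (u 0) (u 1) := by
        constructor
        · have : (0:ℝ) ≤ 4 * π * k := by positivity
          simp only [hL]; linarith
        · exact (hLN k hkN).trans hu1
      obtain ⟨t, ht, htv⟩ := intermediate_value_Icc (by norm_num : (0:ℝ) ≤ 1) hucont hmem
      exact ⟨t, ht, htv⟩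
    have hcl : IsClosed (Icc (0:ℝ) 1 ∩ u ⁻¹' {L k}) :=
      hucont.preimage_isClosed_of_isClosed isClosed_Icc isClosed_singleton
    have hbdd : BddBelow (Icc (0:ℝ) 1 ∩ u ⁻¹' {L k}) := ⟨0, fun t ht => ht.1.1⟩
    have hmem := hcl.csInf_mem hne hbdd
    have hk0 : k ≠ 0 := by omega
    refine ⟨?_, ?_, ?_⟩
    · simp only [hA, if_neg hk0]; exact hmem.1
    · simp only [hA, if_neg hk0]; exact hmem.2
    · intro t ht; simp only [hA, if_neg hk0]; exact csInf_le hbdd ht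
  have hAmem : ∀ k : ℕ, k ≤ N → A k ∈ Icc (0:ℝ) 1 := by
    intro k hk
    rcases Nat.eq_zero_or_pos k with h | h
    · subst h; rw [hA0]; exact ⟨le_rfl, by norm_num⟩
    · exact (hAk k h hk).1
  have hAua : ∀ k : ℕ, k ≤ N → u (A k) ≤ L k := by
    intro k hk
    rcases Nat.eq_zero_or_pos k with h | h
    · subst h; rw [hA0]; exact hu02π
    · exact le_of_eq (hAk k h hk).2.1
  have hAmono : ∀ k : ℕ, k + 1 ≤ N → A k ≤ A (k + 1) := by
    intro k hk
    have hk1N : k + 1 ≤ N := hk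
    have hAk1 := hAk (k + 1) (by omega) hk1N
    rcases Nat.eq_zero_or_pos k with h | h
    · subst h; rw [hA0]; exact hAk1.1.1
    · -- find a hit of L k inside [0, A (k+1)]
      have hsub : Icc (0:ℝ) (A (k+1)) ⊆ Icc (0:ℝ) 1 :=
        Icc_subset_Icc le_rfl hAk1.1.2
      have hmem : L k ∈ Icc (u 0) (u (A (k+1))) := by
        constructor
        · have : (0:ℝ) ≤ 4 * π * k := by positivity
          simp only [hL]; linarith
        · rw [hAk1.2.1, hLsucc k]; linarith
      obtain ⟨t, ht, htv⟩ := intermediate_value_Icc hAk1.1.1 (hucont.mono hsub) hmem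
      exact ((hAk k h (by omega)).2.2 t ⟨hsub ht, htv⟩).trans ht.2
  -- the per-interval crossing bound
  have hcross : ∀ k : ℕ, k + 1 ≤ N →
      ENNReal.ofReal (2 * ρ₀) ≤ eVariationOn ζ (Icc (A k) (A (k+1))) := by
    intro k hk
    have hAk1 := hAk (k+1) (by omega) hk
    have hAkmem := hAmem k (by omega)
    have hsub : Icc (A k) (A (k+1)) ⊆ Icc (0:ℝ) 1 :=
      Icc_subset_Icc hAkmem.1 hAk1.1.2
    have hhalf1 := hhalf (k+1) hk
    rw [hLsucc k] at hhalf1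
    have hr : 0 < ρ₀ - ε * (L k + 4 * π) := by linarith
    have havoid : ∀ t ∈ Icc (A k) (A (k+1)),
        ρ₀ - ε * (L k + 4 * π) ≤ ‖ζ t‖ → ‖ζ t‖ ≤ ρ₀ - ε * L k →
        ζ t ≠ ((‖ζ t‖ : ℝ) : ℂ) *
          Complex.exp ((((ρ₀ - ‖ζ t‖) / ε : ℝ) : ℂ) * Complex.I) := by
      intro t ht hlo hhi heq
      have ht1 : t ∈ Icc (0:ℝ) 1 := hsub ht
      have hult : L k ≤ u t ∧ u t ≤ L k + 4 * π := by
        rw [huabs t] at hlo hhi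
        constructor <;> nlinarith
      have hψmem : u t ∈ Icc (0:ℝ) (2 * π * M) := by
        refine ⟨(hLnn k).trans hult.1, ?_⟩
        have := (hLsucc k) ▸ hLN (k+1) hk
        have h2π : 2 * π * ((M:ℝ) - 1) ≤ 2 * π * M := by nlinarith
        linarith [hult.2]
      refine hdisj t ht1 (u t) hψmem ?_
      apply Stmt12Aux.toC_inj
      rw [Stmt12Aux.toC_archSpiral]
      have : ((ρ₀ - ε * u t : ℝ) : ℂ) = ((‖ζ t‖ : ℝ) : ℂ) := by
        rw [huabs t]
      rw [this, show Stmt12Aux.toC (δ t) = ζ t from (congrFun hζdef t).symm]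
      simpa only [hu] using heq
    have := Stmt12Aux.cross ζ (A k) (A (k+1)) ρ₀ ε (L k) (hAmono k hk)
      (hζcont.mono hsub) hε (hLnn k) hr
      (by rw [huabs (A k)]; have := hAua k (by omega); nlinarith)
      (by rw [huabs (A (k+1))]; rw [hAk1.2.1, hLsucc k])
      havoid
    refine le_trans (ENNReal.ofReal_le_ofReal ?_) this
    linarith
  -- chain the crossings
  have hvar : ∀ j : ℕ, j ≤ N →
      ENNReal.ofReal (2 * ρ₀ * j) ≤ eVariationOn ζ (Icc 0 (A j)) := by
    intro j
    induction j with
    | zero => intro _; simp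
    | succ j ih =>
      intro hjN
      have hj : j ≤ N := by omega
      have hprev := ih hj
      have hmono' : A j ≤ A (j+1) := hAmono j hjN
      have hAjnn : 0 ≤ A j := (hAmem j hj).1
      have hadd := eVariationOn.Icc_add_Icc ζ (s := Icc 0 (A (j+1))) hAjnn hmono'
        (⟨hAjnn, hmono'⟩ : A j ∈ Icc 0 (A (j+1)))
      rw [inter_eq_self_of_subset_right (Icc_subset_Icc le_rfl hmono'),
        inter_eq_self_of_subset_right (Icc_subset_Icc hAjnn le_rfl),
        inter_self] at hadd
      calc ENNReal.ofReal (2 * ρ₀ * (j+1 : ℕ))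
          = ENNReal.ofReal (2 * ρ₀ * j) + ENNReal.ofReal (2 * ρ₀) := by
            rw [← ENNReal.ofReal_add (by positivity) (by positivity)]
            congr 1
            push_cast
            ring
        _ ≤ eVariationOn ζ (Icc 0 (A j)) + eVariationOn ζ (Icc (A j) (A (j+1))) :=
            add_le_add hprev (hcross j hjN)
        _ = eVariationOn ζ (Icc 0 (A (j+1))) := hadd
  -- conclude
  have hNval : (5:ℝ)/ρ₀ ≤ (N:ℝ) := by
    have h1' := Nat.le_ceil ((5:ℝ)/ρ₀)
    have h2' : ((⌈(5:ℝ)/ρ₀⌉₊ : ℕ) : ℝ) ≤ (N:ℝ) := by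
      have : (⌈(5:ℝ)/ρ₀⌉₊ : ℕ) ≤ N := by omega
      exact_mod_cast this
    linarith
  have h10 : (10:ℝ) ≤ 2 * ρ₀ * N := by
    rw [div_le_iff₀ hρ₀] at hNval
    nlinarith
  have hfin := hvar N le_rfl
  have hANsub : Icc (0:ℝ) (A N) ⊆ Icc 0 1 :=
    Icc_subset_Icc le_rfl (hAmem N le_rfl).2
  have hlip : eVariationOn ζ (Icc (0:ℝ) 1) ≤ eVariationOn δ (Icc (0:ℝ) 1) := by
    have h := (Stmt12Aux.toC_lipschitz.lipschitzOnWith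
      (s := (univ : Set (EuclideanSpace ℝ (Fin 2))))).comp_eVariationOn_le
      (mapsTo_univ δ (Icc (0:ℝ) 1))
    simpa [hζdef, Function.comp_def] using h
  calc ENNReal.ofReal 10 ≤ ENNReal.ofReal (2 * ρ₀ * N) := ENNReal.ofReal_le_ofReal h10
    _ ≤ eVariationOn ζ (Icc 0 (A N)) := hfin
    _ ≤ eVariationOn ζ (Icc 0 1) := eVariationOn.mono ζ hANsub
    _ ≤ eVariationOn δ (Icc 0 1) := hlip
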